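/- Any two distinct maximal saturated subsets of vertices of a graph G_0 (maximal subsets X with G_0[X] having exactly 2|X|-2 edges and both of two given complementary acyclic spanning subgraphs restricting to trees on X) are disjoint. Consequently, the maximal saturated subsets form a partition of the vertex set. -/

import Mathlib

open Finset Matrix
open scoped Classical

variable {V E : Type*}

/-- Two vertices are joined by an edge of the edge set `S`. -/
def adjRel (src tgt : E → V) (S : Finset E) (u v : V) : Prop :=
  ∃ e ∈ S, (src e = u ∧ tgt e = v) ∨ (src e = v ∧ tgt e = u)

/-- Reachability using only edges in `S`. -/
def reach (src tgt : E → V) (S : Finset E) : V → V → Prop :=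
  Relation.EqvGen (adjRel src tgt S)

/-- Number of connected components of the spanning subgraph with edge set `S`. -/
noncomputable def nComp (src tgt : E → V) (S : Finset E) : ℕ :=
  Nat.card (Quotient (Relation.EqvGen.setoid (adjRel src tgt S)))

/-- A spanning tree: connected spanning subgraph with `|V| - 1` edges. -/
def IsSpanningTree (src tgt : E → V) [Fintype V] (S : Finset E) : Prop :=
  nComp src tgt S = 1 ∧ S.card + 1 = Fintype.card V

/-- A spanning 2-forest: spanning subgraph with exactly two connected
components and `|V| - 2` edges (hence acyclic). -/
def IsSpanning2Forest (src tgt : E → V) [Fintype V] (S : Finset E) : Prop :=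
  nComp src tgt S = 2 ∧ S.card + 2 = Fintype.card V

/-- The edges of `S` with both endpoints in `X` (edge set of the induced subgraph `S[X]`). -/
noncomputable def inducedEdges (src tgt : E → V) (S : Finset E) (X : Finset V) : Finset E :=
  S.filter fun e => src e ∈ X ∧ tgt e ∈ X

/-- The induced subgraph `S[X]` is a (spanning) tree on the vertex set `X`. -/
def IsTreeOn (src tgt : E → V) (X : Finset V) (S : Finset E) : Prop :=
  (inducedEdges src tgt S X).card + 1 = X.card ∧
    ∀ u ∈ X, ∀ v ∈ X, reach src tgt (inducedEdges src tgt S X) u v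

/-- `X` is saturated w.r.t. the (multi)graph with all edges `E`:
the induced subgraph has exactly `2|X| - 2` edges. -/
def Saturated (src tgt : E → V) [Fintype E] (X : Finset V) : Prop :=
  X.Nonempty ∧ (inducedEdges src tgt Finset.univ X).card + 2 = 2 * X.card

section helpers
variable (src tgt : E → V)

lemma adjRel_mono {S S' : Finset E} (h : S ⊆ S') {u v : V} :
    adjRel src tgt S u v → adjRel src tgt S' u v := by
  rintro ⟨e, he, hor⟩; exact ⟨e, h he, hor⟩

lemma almost_inj_card_le {α β : Type*} [Finite α] [Finite β] (f : α → β) (a b : α)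
    (h : ∀ x y, f x = f y → x = y ∨ ((x = a ∨ x = b) ∧ (y = a ∨ y = b))) :
    Nat.card α ≤ Nat.card β + 1 := by
  cases nonempty_fintype α
  cases nonempty_fintype β
  rw [Nat.card_eq_fintype_card, Nat.card_eq_fintype_card]
  have h1 : ((univ : Finset α).erase b).card + 1 = Fintype.card α := by
    rw [Finset.card_erase_add_one (mem_univ b), Finset.card_univ]
  have h2 : ((univ : Finset α).erase b).card ≤ Fintype.card β := by
    rw [← Finset.card_univ]
    apply Finset.card_le_card_of_injOn f (fun x _ => mem_univ _)
    intro x hx y hy hxy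
    rcases h x y hxy with h' | ⟨hx', hy'⟩
    · exact h'
    · have hxb : x ≠ b := Finset.ne_of_mem_erase hx
      have hyb : y ≠ b := Finset.ne_of_mem_erase hy
      rw [hx'.resolve_right hxb, hy'.resolve_right hyb]
  omega

lemma nComp_empty [Fintype V] : nComp src tgt (∅ : Finset E) = Fintype.card V := by
  have hbij : Function.Bijective
      (Quotient.mk (Relation.EqvGen.setoid (adjRel src tgt (∅ : Finset E)))) := by
    constructor
    · intro u v h
      have h' := Quotient.exact h
      have h2 : Relation.EqvGen (Eq : V → V → Prop) u v :=
        Relation.EqvGen.mono (fun a b hab => by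
          rcases hab with ⟨e, he, _⟩; exact absurd he (Finset.notMem_empty e)) _ _ h'
      exact (eq_equivalence.eqvGen_iff).mp h2
    · exact Quotient.exists_rep
  rw [nComp, ← Nat.card_eq_fintype_card]
  exact (Nat.card_eq_of_bijective _ hbij).symm

variable [Finite V]

lemma nComp_le_insert (e : E) (S : Finset E) :
    nComp src tgt S ≤ nComp src tgt (insert e S) + 1 := by
  set s := src e with hs
  set t := tgt e with ht
  set sd := Relation.EqvGen.setoid (adjRel src tgt S) with hsd
  set sd' := Relation.EqvGen.setoid (adjRel src tgt (insert e S)) with hsd'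
  have hmono : ∀ a b : V, sd.r a b → sd'.r a b := fun a b hab =>
    Relation.EqvGen.mono (fun u v => adjRel_mono src tgt (Finset.subset_insert e S)) _ _ hab
  let f : Quotient sd → Quotient sd' :=
    Quotient.lift (fun u => Quotient.mk sd' u) (fun a b hab => Quotient.sound (hmono a b hab))
  -- the "almost equivalence" relation
  set C : V → Prop := fun x => Relation.EqvGen (adjRel src tgt S) x s ∨
      Relation.EqvGen (adjRel src tgt S) x t with hC
  set rel : V → V → Prop := fun u v =>
      Relation.EqvGen (adjRel src tgt S) u v ∨ (C u ∧ C v) with hrel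
  have hrefl : ∀ u, rel u u := fun u => Or.inl (Relation.EqvGen.refl u)
  have hequiv : Equivalence rel := by
    constructor
    · exact hrefl
    · rintro u v (h | ⟨h1, h2⟩)
      · exact Or.inl (Relation.EqvGen.symm _ _ h)
      · exact Or.inr ⟨h2, h1⟩
    · rintro u v w (h1 | ⟨hu, hv⟩) (h2 | ⟨hv', hw⟩)
      · exact Or.inl (Relation.EqvGen.trans _ _ _ h1 h2)
      · refine Or.inr ⟨?_, hw⟩
        rcases hv' with h | h
        · exact Or.inl (Relation.EqvGen.trans _ _ _ h1 h)
        · exact Or.inr (Relation.EqvGen.trans _ _ _ h1 h)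
      · refine Or.inr ⟨hu, ?_⟩
        rcases hv with h | h
        · exact Or.inl (Relation.EqvGen.trans _ _ _ (Relation.EqvGen.symm _ _ h2) h)
        · exact Or.inr (Relation.EqvGen.trans _ _ _ (Relation.EqvGen.symm _ _ h2) h)
      · exact Or.inr ⟨hu, hw⟩
  have hbase : ∀ u v, adjRel src tgt (insert e S) u v → rel u v := by
    rintro u v ⟨e', he', hor⟩
    rcases Finset.mem_insert.mp he' with rfl | he'S
    · rcases hor with ⟨h1, h2⟩ | ⟨h1, h2⟩
      · exact Or.inr ⟨Or.inl (h1 ▸ Relation.EqvGen.refl _),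
          Or.inr (h2 ▸ Relation.EqvGen.refl _)⟩
      · exact Or.inr ⟨Or.inr (h2 ▸ Relation.EqvGen.refl _),
          Or.inl (h1 ▸ Relation.EqvGen.refl _)⟩
    · exact Or.inl (Relation.EqvGen.rel _ _ ⟨e', he'S, hor⟩)
  have hkey : ∀ x y : Quotient sd, f x = f y →
      x = y ∨ ((x = Quotient.mk sd s ∨ x = Quotient.mk sd t) ∧
               (y = Quotient.mk sd s ∨ y = Quotient.mk sd t)) := by
    intro x y hxy
    obtain ⟨u, rfl⟩ := Quotient.exists_rep x
    obtain ⟨v, rfl⟩ := Quotient.exists_rep y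
    have h' : Relation.EqvGen (adjRel src tgt (insert e S)) u v := Quotient.exact hxy
    have h2 : rel u v := hequiv.eqvGen_iff.mp (Relation.EqvGen.mono hbase _ _ h')
    rcases h2 with h | ⟨hu, hv⟩
    · exact Or.inl (Quotient.sound h)
    · refine Or.inr ⟨?_, ?_⟩
      · rcases hu with h | h
        · exact Or.inl (Quotient.sound h)
        · exact Or.inr (Quotient.sound h)
      · rcases hv with h | h
        · exact Or.inl (Quotient.sound h)
        · exact Or.inr (Quotient.sound h)
  exact almost_inj_card_le f (Quotient.mk sd s) (Quotient.mk sd t) hkey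

lemma nComp_subset_le {S' S : Finset E} (h : S' ⊆ S) :
    nComp src tgt S' ≤ nComp src tgt S + (S \ S').card := by
  generalize hn : (S \ S').card = n
  induction n generalizing S' with
  | zero =>
    have : S \ S' = ∅ := Finset.card_eq_zero.mp hn
    have hSS : S ⊆ S' := fun x hx => by
      by_contra hx'
      exact absurd (Finset.mem_sdiff.mpr ⟨hx, hx'⟩) (this ▸ Finset.notMem_empty x)
    rw [Finset.Subset.antisymm h hSS]
    omega
  | succ n ih =>
    have hne : (S \ S').Nonempty := Finset.card_pos.mp (by omega)
    obtain ⟨e, he⟩ := hne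
    obtain ⟨heS, heS'⟩ := Finset.mem_sdiff.mp he
    have hsub : insert e S' ⊆ S := Finset.insert_subset heS h
    have hcard : (S \ insert e S').card = n := by
      rw [Finset.sdiff_insert, Finset.card_erase_of_mem he, hn]; omega
    have := ih hsub hcard
    calc nComp src tgt S' ≤ nComp src tgt (insert e S') + 1 := nComp_le_insert src tgt e S'
      _ ≤ nComp src tgt S + n + 1 := by omega
lemma card_le_nComp_add (S : Finset E) [Fintype V] :
    Fintype.card V ≤ nComp src tgt S + S.card := by
  induction S using Finset.induction_on with
  | empty => rw [nComp_empty src tgt]; simp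
  | @insert e S heS ih =>
    have h1 := nComp_le_insert src tgt e S
    rw [Finset.card_insert_of_notMem heS]
    omega

lemma isolated_bound [Fintype V] {S' : Finset E} {X : Finset V} (hX : X.Nonempty)
    (hend : ∀ e' ∈ S', src e' ∈ X ∧ tgt e' ∈ X) :
    Fintype.card V + 1 ≤ nComp src tgt S' + X.card := by
  obtain ⟨x0, hx0⟩ := hX
  set g : V → V := fun v => if v ∈ X then x0 else v with hg
  set sd := Relation.EqvGen.setoid (adjRel src tgt S') with hsd
  have hgrel : ∀ u v, Relation.EqvGen (adjRel src tgt S') u v → g u = g v := by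
    intro u v h
    have hequiv : Equivalence (fun a b : V => g a = g b) :=
      ⟨fun _ => rfl, Eq.symm, Eq.trans⟩
    refine hequiv.eqvGen_iff.mp (Relation.EqvGen.mono ?_ _ _ h)
    rintro a b ⟨e', he', hor⟩
    obtain ⟨h1, h2⟩ := hend e' he'
    rcases hor with ⟨ha, hb⟩ | ⟨ha, hb⟩ <;>
      simp [hg, ← ha, ← hb, h1, h2]
  set A : Finset V := (univ \ X) ∪ {x0} with hA
  have hcardA : A.card = Fintype.card V - X.card + 1 := by
    rw [hA, Finset.card_union_of_disjoint (by simp [hx0]), Finset.card_sdiff_of_subset (Finset.subset_univ X)]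
    simp
  have hinj : A.card ≤ Fintype.card (Quotient sd) := by
    rw [← Finset.card_univ]
    apply Finset.card_le_card_of_injOn (fun v => Quotient.mk sd v) (fun x _ => mem_univ _)
    intro u hu v hv huv
    have h := hgrel u v (Quotient.exact huv)
    have hAu : u ∉ X ∨ u = x0 := by
      rcases Finset.mem_union.mp hu with h' | h'
      · exact Or.inl (Finset.mem_sdiff.mp h').2
      · exact Or.inr (Finset.mem_singleton.mp h')
    have hAv : v ∉ X ∨ v = x0 := by
      rcases Finset.mem_union.mp hv with h' | h'
      · exact Or.inl (Finset.mem_sdiff.mp h').2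
      · exact Or.inr (Finset.mem_singleton.mp h')
    rcases hAu with hu' | rfl <;> rcases hAv with hv' | rfl
    · simpa [hg, hu', hv'] using h
    · simp [hg, hu', hx0] at h; exact absurd (h ▸ hx0) hu'
    · simp [hg, hv', hx0] at h; exact absurd (h ▸ hx0) hv'
    · rfl
  have hQ : Fintype.card (Quotient sd) = nComp src tgt S' := by
    rw [nComp, Nat.card_eq_fintype_card]
  have hXle : X.card ≤ Fintype.card V := Finset.card_le_univ X
  omega

lemma nComp_erase_loop [Fintype V] {e : E} (he : src e = tgt e) (S : Finset E) :
    nComp src tgt (S.erase e) = nComp src tgt S := by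
  have hset : Relation.EqvGen.setoid (adjRel src tgt (S.erase e)) =
      Relation.EqvGen.setoid (adjRel src tgt S) := by
    apply Setoid.ext
    intro a b
    constructor
    · exact Relation.EqvGen.mono (fun u v => adjRel_mono src tgt (Finset.erase_subset e S)) a b
    · intro h
      refine (Relation.EqvGen.is_equivalence _).eqvGen_iff.mp (Relation.EqvGen.mono ?_ _ _ h)
      rintro u v ⟨e', he', hor⟩
      by_cases h' : e' = e
      · subst h'
        rcases hor with ⟨h1, h2⟩ | ⟨h1, h2⟩ <;>
          · rw [← h1, ← h2, he]; exact Relation.EqvGen.refl _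
      · exact Relation.EqvGen.rel _ _ ⟨e', Finset.mem_erase.mpr ⟨h', he'⟩, hor⟩
  rw [nComp, nComp, hset]


lemma tree_bound [Fintype V] {S : Finset E} (hcomp : nComp src tgt S + S.card = Fintype.card V)
    {X : Finset V} (hX : X.Nonempty) :
    (inducedEdges src tgt S X).card + 1 ≤ X.card := by
  set S' := inducedEdges src tgt S X with hS'
  have hsub : S' ⊆ S := Finset.filter_subset _ S
  have hend : ∀ e' ∈ S', src e' ∈ X ∧ tgt e' ∈ X := fun e' he' =>
    (Finset.mem_filter.mp he').2
  have h1 := nComp_subset_le src tgt hsub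
  have h2 := isolated_bound src tgt hX hend
  have h3 : (S \ S').card = S.card - S'.card := Finset.card_sdiff_of_subset hsub
  have h4 : S'.card ≤ S.card := Finset.card_le_card hsub
  omega

end helpers

/-- In a connected multigraph whose edge set is the disjoint union
of a spanning tree and a spanning 2-forest, any two distinct maximal saturated
subsets of vertices are disjoint, and every vertex lies in a maximal saturated
subset: the maximal saturated subsets partition `V`. -/
theorem stmt_3 [Fintype V] [Fintype E] (src tgt : E → V)
    (hconn : nComp src tgt (Finset.univ : Finset E) = 1)
    (hG : ∃ T F : Finset E, IsSpanningTree src tgt T ∧ IsSpanning2Forest src tgt F ∧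
      Disjoint T F ∧ T ∪ F = Finset.univ) :
    (∀ X X' : Finset V,
      (Saturated src tgt X ∧ ∀ Z, Saturated src tgt Z → X ⊆ Z → X = Z) →
      (Saturated src tgt X' ∧ ∀ Z, Saturated src tgt Z → X' ⊆ Z → X' = Z) →
      X ≠ X' → Disjoint X X') ∧
    (∀ v : V, ∃ X : Finset V,
      (Saturated src tgt X ∧ ∀ Z, Saturated src tgt Z → X ⊆ Z → X = Z) ∧ v ∈ X) := by
  obtain ⟨T, F, ⟨hT1, hT2⟩, ⟨hF1, hF2⟩, hdisj, huniv⟩ := hG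
  -- no loops
  have hnoloop : ∀ e : E, src e ≠ tgt e := by
    intro e he
    have heU : e ∈ T ∪ F := huniv ▸ Finset.mem_univ e
    rcases Finset.mem_union.mp heU with heT | heF
    · have hpos : 1 ≤ T.card := Finset.card_pos.mpr ⟨e, heT⟩
      have h1 := card_le_nComp_add src tgt (T.erase e)
      rw [nComp_erase_loop src tgt he, hT1, Finset.card_erase_of_mem heT] at h1
      omega
    · have hpos : 1 ≤ F.card := Finset.card_pos.mpr ⟨e, heF⟩
      have h1 := card_le_nComp_add src tgt (F.erase e)
      rw [nComp_erase_loop src tgt he, hF1, Finset.card_erase_of_mem heF] at h1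
      omega
  have hcompT : nComp src tgt T + T.card = Fintype.card V := by omega
  have hcompF : nComp src tgt F + F.card = Fintype.card V := by omega
  -- upper bound
  have hub : ∀ X : Finset V, X.Nonempty →
      (inducedEdges src tgt Finset.univ X).card + 2 ≤ 2 * X.card := by
    intro X hX
    have hTb := tree_bound src tgt hcompT hX
    have hFb := tree_bound src tgt hcompF hX
    have hsplit : inducedEdges src tgt Finset.univ X =
        inducedEdges src tgt T X ∪ inducedEdges src tgt F X := by
      rw [inducedEdges, inducedEdges, inducedEdges, ← Finset.filter_union, huniv]
    have hdisj2 : Disjoint (inducedEdges src tgt T X) (inducedEdges src tgt F X) :=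
      Finset.disjoint_filter_filter hdisj
    have hcard : (inducedEdges src tgt Finset.univ X).card =
        (inducedEdges src tgt T X).card + (inducedEdges src tgt F X).card := by
      rw [hsplit, Finset.card_union_of_disjoint hdisj2]
    omega
  -- supermodularity
  have hsup : ∀ X Y : Finset V,
      (inducedEdges src tgt Finset.univ X).card + (inducedEdges src tgt Finset.univ Y).card ≤
      (inducedEdges src tgt Finset.univ (X ∪ Y)).card +
        (inducedEdges src tgt Finset.univ (X ∩ Y)).card := by
    intro X Y
    have h1 : inducedEdges src tgt Finset.univ X ∪ inducedEdges src tgt Finset.univ Y ⊆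
        inducedEdges src tgt Finset.univ (X ∪ Y) := by
      intro e he
      rcases Finset.mem_union.mp he with h | h <;>
      · obtain ⟨_, hs, ht⟩ := Finset.mem_filter.mp h
        exact Finset.mem_filter.mpr ⟨Finset.mem_univ e,
          Finset.mem_union.mpr (by tauto), Finset.mem_union.mpr (by tauto)⟩
    have h2 : inducedEdges src tgt Finset.univ X ∩ inducedEdges src tgt Finset.univ Y =
        inducedEdges src tgt Finset.univ (X ∩ Y) := by
      ext e
      simp only [inducedEdges, Finset.mem_inter, Finset.mem_filter, Finset.mem_univ,
        true_and]
      tauto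
    calc (inducedEdges src tgt Finset.univ X).card + (inducedEdges src tgt Finset.univ Y).card
        = (inducedEdges src tgt Finset.univ X ∪ inducedEdges src tgt Finset.univ Y).card +
          (inducedEdges src tgt Finset.univ X ∩ inducedEdges src tgt Finset.univ Y).card :=
          (Finset.card_union_add_card_inter _ _).symm
      _ ≤ _ := by
          rw [h2]
          exact add_le_add_left (Finset.card_le_card h1) _
  -- union of overlapping saturated sets
  have hunion : ∀ X Y : Finset V, Saturated src tgt X → Saturated src tgt Y →
      ¬ Disjoint X Y → Saturated src tgt (X ∪ Y) := by
    intro X Y hX hY hnd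
    obtain ⟨v, hvX, hvY⟩ := Finset.not_disjoint_iff.mp hnd
    have hiXY : (X ∩ Y).Nonempty := ⟨v, Finset.mem_inter.mpr ⟨hvX, hvY⟩⟩
    have hXuY : (X ∪ Y).Nonempty := ⟨v, Finset.mem_union.mpr (Or.inl hvX)⟩
    have h1 := hub (X ∩ Y) hiXY
    have h2 := hub (X ∪ Y) hXuY
    have h3 := hsup X Y
    have h4 := Finset.card_union_add_card_inter X Y
    obtain ⟨_, hXe⟩ := hX
    obtain ⟨_, hYe⟩ := hY
    exact ⟨hXuY, by omega⟩
  constructor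
  · intro X X' ⟨hX, hXmax⟩ ⟨hX', hX'max⟩ hne
    by_contra hnd
    have hsat := hunion X X' hX hX' hnd
    have e1 := hXmax (X ∪ X') hsat Finset.subset_union_left
    have e2 := hX'max (X ∪ X') hsat Finset.subset_union_right
    exact hne (e1.trans e2.symm)
  · intro v
    have hsingle : Saturated src tgt {v} := by
      refine ⟨⟨v, Finset.mem_singleton_self v⟩, ?_⟩
      have hempty : inducedEdges src tgt Finset.univ ({v} : Finset V) = ∅ := by
        ext e
        simp only [inducedEdges, Finset.mem_filter, Finset.mem_univ, true_and,
          Finset.mem_singleton, Finset.notMem_empty, iff_false, not_and]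
        intro hs ht
        exact hnoloop e (hs.trans ht.symm)
      rw [hempty]
      simp
    set 𝒮 : Finset (Finset V) :=
      Finset.univ.filter (fun Z => Saturated src tgt Z ∧ v ∈ Z) with h𝒮
    have hmem : ({v} : Finset V) ∈ 𝒮 :=
      Finset.mem_filter.mpr ⟨Finset.mem_univ _, hsingle, Finset.mem_singleton_self v⟩
    obtain ⟨X, hX𝒮, hmax⟩ := Finset.exists_max_image 𝒮 Finset.card ⟨{v}, hmem⟩
    obtain ⟨-, hXsat, hvX⟩ := Finset.mem_filter.mp hX𝒮
    refine ⟨X, ⟨⟨hXsat, ?_⟩, hvX⟩⟩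
    intro Z hZ hXZ
    have hZ𝒮 : Z ∈ 𝒮 := Finset.mem_filter.mpr ⟨Finset.mem_univ _, hZ, hXZ hvX⟩
    exact Finset.eq_of_subset_of_card_le hXZ (hmax Z hZ𝒮)
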